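/- There exists a constant C > 0 such that the following holds for all integers n, B, n' with 1 < B ≤ n/(log n)^5 and B·(log n)^5 ≤ n' ≤ n. Set m' = ⌈(n'/B) − (1/2)(n'/B)^{2/3}⌉. Let Z_1, ..., Z_{n'} be i.i.d. uniform on {1,...,B} (n' balls thrown one after another into B bins), and for a bin b and time t let L_b(t) = |{r ≤ t : Z_r = b}|. Then with probability at least 1 − C/n^{11}: (i) every bin b satisfies L_b(n') ≥ m'; and (ii) letting t* be the first time at which some bin's load reaches m', every bin b satisfies L_b(t*) ≥ m' − (1/5)·d(n'/B). -/

import Mathlib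

open MeasureTheory
open scoped ENNReal

/-- The distribution of `n'` balls thrown independently and uniformly into `B` bins. -/
noncomputable def uniformBins (n' B : ℕ) : Measure (Fin n' → Fin B) :=
  Measure.pi fun _ => ((B : ℝ≥0∞)⁻¹ • Measure.count)

/-- `load z b t`: the number of balls among the first `t` that land in bin `b`. -/
def load {n' B : ℕ} (z : Fin n' → Fin B) (b : Fin B) (t : ℕ) : ℕ :=
  (Finset.univ.filter fun r : Fin n' => (r : ℕ) < t ∧ z r = b).card

/-- `dFn y = y - ⌈y - (1/2)·y^(2/3)⌉`, so that `⌈y - (1/2)·y^(2/3)⌉ = y - dFn y`. -/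
noncomputable def dFn (y : ℝ) : ℝ := y - (⌈y - (1/2) * y ^ ((2:ℝ)/3)⌉ : ℤ)

/-- The bound `m' = ⌈(n'/B) - (1/2)·(n'/B)^(2/3)⌉`. -/
noncomputable def mBound (n' B : ℕ) : ℤ :=
  ⌈((n' : ℝ)/B) - (1/2) * (((n' : ℝ)/B) ^ ((2:ℝ)/3))⌉

/-- The first time at which some bin's load reaches `m`. -/
noncomputable def hitTime {n' B : ℕ} (z : Fin n' → Fin B) (m : ℤ) : ℕ :=
  sInf {t : ℕ | ∃ b : Fin B, m ≤ (load z b t : ℤ)}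

/-- Balls-and-bins concentration: with probability `1 - O(1/n^11)`, (i) every bin ends
with load at least `m'`, and (ii) at the first moment some bin's load reaches `m'`,
every bin has load at least `m' - (1/5)·d(n'/B)`. -/
lemma ub_prob (n' B : ℕ) (hB : 0 < B) : IsProbabilityMeasure (uniformBins n' B) := by
  have h : IsProbabilityMeasure (((B : ℝ≥0∞)⁻¹ • Measure.count : Measure (Fin B))) := by
    constructor
    simp [Measure.count_univ, ENNReal.inv_mul_cancel, Nat.cast_ne_zero, hB.ne',
      ENNReal.natCast_ne_top]
  haveI := h
  exact MeasureTheory.Measure.pi.instIsProbabilityMeasure _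

lemma ub_singleton (n' B : ℕ) (hB : 0 < B) (z : Fin n' → Fin B) :
    uniformBins n' B {z} = ((B : ℝ≥0∞)⁻¹) ^ n' := by
  haveI : ∀ _ : Fin n', IsProbabilityMeasure (((B : ℝ≥0∞)⁻¹ • Measure.count : Measure (Fin B))) := by
    intro _
    constructor
    simp [Measure.count_univ, ENNReal.inv_mul_cancel, Nat.cast_ne_zero, hB.ne',
      ENNReal.natCast_ne_top]
  rw [← Set.univ_pi_singleton z, uniformBins, Measure.pi_pi]
  simp [Measure.count_singleton]

lemma card_filter_lt (n' s : ℕ) (hs : s ≤ n') :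
    (Finset.univ.filter fun r : Fin n' => (r : ℕ) < s).card = s := by
  have : (Finset.univ.filter fun r : Fin n' => (r : ℕ) < s)
      = Finset.map (Fin.castLEEmb hs) Finset.univ := by
    ext r
    simp only [Finset.mem_filter, Finset.mem_univ, true_and, Finset.mem_map,
      Fin.castLEEmb_apply]
    constructor
    · intro hr; exact ⟨⟨r, hr⟩, rfl⟩
    · rintro ⟨j, rfl⟩; simp [j.2]
  simp [this]

lemma load_eq_sum {n' B : ℕ} (z : Fin n' → Fin B) (b : Fin B) (t : ℕ) :
    (load z b t : ℝ) = ∑ r : Fin n', (if (r : ℕ) < t ∧ z r = b then (1:ℝ) else 0) := by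
  rw [load, Finset.card_filter]
  push_cast
  rfl

lemma mgf_load (n' B : ℕ) (hB : 0 < B) (b : Fin B) (s : ℕ) (hs : s ≤ n') (l : ℝ) :
    ∫ z, Real.exp (l * (load z b s)) ∂(uniformBins n' B)
      = (1 + (Real.exp l - 1) / B) ^ s := by
  haveI := ub_prob n' B hB
  have hint : ∀ z : Fin n' → Fin B, Real.exp (l * (load z b s))
      = ∏ r : Fin n', (if (r : ℕ) < s ∧ z r = b then Real.exp l else 1) := by
    intro z
    rw [load_eq_sum, Finset.mul_sum, Real.exp_sum]
    refine Finset.prod_congr rfl fun r _ => ?_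
    by_cases h : (r : ℕ) < s ∧ z r = b <;> simp [h]
  simp_rw [hint]
  rw [MeasureTheory.integral_fintype (Integrable.of_finite)]; simp only [measureReal_def]
  have hsing : ∀ z : Fin n' → Fin B, ((uniformBins n' B {z}).toReal : ℝ)
      = ∏ _r : Fin n', ((B : ℝ))⁻¹ := by
    intro z
    rw [ub_singleton n' B hB z]
    rw [ENNReal.toReal_pow, ENNReal.toReal_inv]
    simp
  have key : ∑ z : Fin n' → Fin B, (uniformBins n' B {z}).toReal •
        ∏ r : Fin n', (if (r : ℕ) < s ∧ z r = b then Real.exp l else 1)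
      = ∏ r : Fin n', ∑ x : Fin B,
          (B : ℝ)⁻¹ * (if (r : ℕ) < s ∧ x = b then Real.exp l else 1) := by
    rw [Finset.prod_univ_sum]
    rw [Fintype.piFinset_univ]
    refine Finset.sum_congr rfl fun z _ => ?_
    rw [hsing z, smul_eq_mul, ← Finset.prod_mul_distrib]
  rw [key]
  have hx : ∀ r : Fin n', (∑ x : Fin B,
      (B : ℝ)⁻¹ * (if (r : ℕ) < s ∧ x = b then Real.exp l else 1))
      = if (r : ℕ) < s then 1 + (Real.exp l - 1) / B else 1 := by
    intro r
    by_cases h : (r : ℕ) < s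
    · simp only [h, true_and, if_true]
      rw [← Finset.mul_sum]
      have hsum : (∑ i : Fin B, if i = b then Real.exp l else 1)
          = Real.exp l - 1 + B := by
        have h2 : ∀ i : Fin B, (if i = b then Real.exp l else 1)
            = (if i = b then Real.exp l - 1 else 0) + 1 := by
          intro i; by_cases h3 : i = b <;> simp [h3]
        simp_rw [h2]
        rw [Finset.sum_add_distrib, Finset.sum_ite_eq' Finset.univ b, Finset.sum_const]
        simp
      rw [hsum]
      have hB' : (B : ℝ) ≠ 0 := Nat.cast_ne_zero.mpr hB.ne'
      field_simp
      ring
    · simp only [h, false_and, if_false, mul_one]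
      rw [Finset.sum_const, Finset.card_univ, Fintype.card_fin, nsmul_eq_mul]
      field_simp
  simp_rw [hx]
  rw [← Finset.prod_filter, Finset.prod_const, card_filter_lt n' s hs]

lemma exp_quad_up {l : ℝ} (hl0 : 0 ≤ l) (hl1 : l ≤ 1) :
    Real.exp l ≤ 1 + l + l ^ 2 := by
  have h := Real.exp_bound (x := l) (by rwa [abs_of_nonneg hl0]) (n := 2) (by norm_num)
  have h2 : |Real.exp l - (1 + l)| ≤ |l| ^ 2 * (3 / 4) := by
    convert h using 2
    · norm_num [Finset.sum_range_succ]
    · norm_num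
  rw [abs_of_nonneg hl0] at h2
  have := abs_le.mp h2
  nlinarith [sq_nonneg l]

lemma exp_quad_lo {l : ℝ} (hl0 : 0 ≤ l) (hl1 : l ≤ 1) :
    Real.exp (-l) ≤ 1 - l + l ^ 2 := by
  have h := Real.exp_bound (x := -l) (by rwa [abs_neg, abs_of_nonneg hl0]) (n := 2) (by norm_num)
  have h2 : |Real.exp (-l) - (1 - l)| ≤ |l| ^ 2 * (3 / 4) := by
    have : (∑ m ∈ Finset.range 2, (-l) ^ m / m.factorial) = 1 - l := by
      norm_num [Finset.sum_range_succ]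
      ring
    rw [this] at h
    rw [abs_neg] at h
    convert h using 2
    norm_num
  rw [abs_of_nonneg hl0] at h2
  have := abs_le.mp h2
  nlinarith [sq_nonneg l]

lemma tailP_up (n' B : ℕ) (hB : 0 < B) (b : Fin B) (s : ℕ) (hs : s ≤ n') (l ε : ℝ)
    (hl0 : 0 ≤ l) (hl1 : l ≤ 1) :
    (uniformBins n' B {z | (s : ℝ)/B + ε ≤ (load z b s : ℝ)}).toReal ≤
      Real.exp (((n' : ℝ)/B) * l ^ 2 - l * ε) := by
  haveI := ub_prob n' B hB
  have h1 := ProbabilityTheory.measure_ge_le_exp_mul_mgf (μ := uniformBins n' B)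
      (X := fun z => (load z b s : ℝ)) (t := l) ((s : ℝ)/B + ε) hl0 (Integrable.of_finite)
  rw [ProbabilityTheory.mgf] at h1
  rw [show (∫ z, Real.exp (l * (load z b s : ℝ)) ∂(uniformBins n' B))
      = (1 + (Real.exp l - 1) / B) ^ s from mgf_load n' B hB b s hs l] at h1
  refine h1.trans ?_
  have hBpos : (0 : ℝ) < B := Nat.cast_pos.mpr hB
  have hxnn : (0 : ℝ) ≤ (Real.exp l - 1) / B := by
    have h1e : (1 : ℝ) ≤ Real.exp l := by
      rw [← Real.exp_zero]; exact Real.exp_le_exp.mpr hl0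
    apply div_nonneg (by linarith) hBpos.le
  have hpow : (1 + (Real.exp l - 1) / B) ^ s ≤ Real.exp ((s : ℝ) * ((Real.exp l - 1) / B)) := by
    calc (1 + (Real.exp l - 1) / B) ^ s ≤ (Real.exp ((Real.exp l - 1) / B)) ^ s := by
          apply pow_le_pow_left₀ (by linarith)
          exact Real.add_one_le_exp _ |>.trans_eq' (by ring_nf)
      _ = Real.exp ((s : ℝ) * ((Real.exp l - 1) / B)) := by
          rw [← Real.exp_nat_mul]
  calc Real.exp (-l * ((s : ℝ)/B + ε)) * (1 + (Real.exp l - 1) / B) ^ s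
      ≤ Real.exp (-l * ((s : ℝ)/B + ε)) * Real.exp ((s : ℝ) * ((Real.exp l - 1) / B)) := by
        exact mul_le_mul_of_nonneg_left hpow (Real.exp_pos _).le
    _ = Real.exp ((s : ℝ)/B * (Real.exp l - 1 - l) - l * ε) := by
        rw [← Real.exp_add]; congr 1; field_simp; ring
    _ ≤ Real.exp (((n' : ℝ)/B) * l ^ 2 - l * ε) := by
        apply Real.exp_le_exp.mpr
        have hq : Real.exp l - 1 - l ≤ l ^ 2 := by
          have := exp_quad_up hl0 hl1; linarith
        have hq0 : 0 ≤ Real.exp l - 1 - l := by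
          have := Real.add_one_le_exp l; linarith
        have hcast : (s : ℝ) ≤ (n' : ℝ) := by exact_mod_cast hs
        have hsB : (s : ℝ)/B ≤ (n' : ℝ)/B :=
          div_le_div_of_nonneg_right hcast hBpos.le
        have hsB0 : (0 : ℝ) ≤ (s : ℝ)/B := by positivity
        nlinarith [mul_le_mul hsB hq hq0 (by positivity : (0:ℝ) ≤ (n' : ℝ)/B)]

lemma tailP_lo (n' B : ℕ) (hB : 0 < B) (b : Fin B) (s : ℕ) (hs : s ≤ n') (l ε : ℝ)
    (hl0 : 0 ≤ l) (hl1 : l ≤ 1) :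
    (uniformBins n' B {z | (load z b s : ℝ) ≤ (s : ℝ)/B - ε}).toReal ≤
      Real.exp (((n' : ℝ)/B) * l ^ 2 - l * ε) := by
  haveI := ub_prob n' B hB
  have h1 := ProbabilityTheory.measure_le_le_exp_mul_mgf (μ := uniformBins n' B)
      (X := fun z => (load z b s : ℝ)) (t := -l) ((s : ℝ)/B - ε) (neg_nonpos.mpr hl0)
      (Integrable.of_finite)
  rw [ProbabilityTheory.mgf] at h1
  rw [show (∫ z, Real.exp (-l * (load z b s : ℝ)) ∂(uniformBins n' B))
      = (1 + (Real.exp (-l) - 1) / B) ^ s from mgf_load n' B hB b s hs (-l)] at h1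
  refine h1.trans ?_
  have hBpos : (0 : ℝ) < B := Nat.cast_pos.mpr hB
  have hB1 : (1 : ℝ) ≤ B := by exact_mod_cast hB
  have hbase : (0 : ℝ) ≤ 1 + (Real.exp (-l) - 1) / B := by
    have h2 : (-1 : ℝ)/B ≤ (Real.exp (-l) - 1) / B := by
      apply div_le_div_of_nonneg_right ?_ hBpos.le
      have := Real.exp_pos (-l); linarith
    have h3 : (-1 : ℝ)/B ≥ -1 := by
      rw [ge_iff_le, neg_le, ← neg_div]
      rw [div_le_one hBpos]
      linarith
    linarith
  have hpow : (1 + (Real.exp (-l) - 1) / B) ^ s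
      ≤ Real.exp ((s : ℝ) * ((Real.exp (-l) - 1) / B)) := by
    calc (1 + (Real.exp (-l) - 1) / B) ^ s ≤ (Real.exp ((Real.exp (-l) - 1) / B)) ^ s := by
          apply pow_le_pow_left₀ hbase
          exact Real.add_one_le_exp _ |>.trans_eq' (by ring_nf)
      _ = _ := by rw [← Real.exp_nat_mul]
  calc Real.exp (-(-l) * ((s : ℝ)/B - ε)) * (1 + (Real.exp (-l) - 1) / B) ^ s
      ≤ Real.exp (-(-l) * ((s : ℝ)/B - ε)) * Real.exp ((s : ℝ) * ((Real.exp (-l) - 1) / B)) :=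
        mul_le_mul_of_nonneg_left hpow (Real.exp_pos _).le
    _ = Real.exp ((s : ℝ)/B * (Real.exp (-l) - 1 + l) - l * ε) := by
        rw [← Real.exp_add]; congr 1; field_simp; ring
    _ ≤ Real.exp (((n' : ℝ)/B) * l ^ 2 - l * ε) := by
        apply Real.exp_le_exp.mpr
        have hq : Real.exp (-l) - 1 + l ≤ l ^ 2 := by
          have := exp_quad_lo hl0 hl1; linarith
        have hq0 : 0 ≤ Real.exp (-l) - 1 + l := by
          have := Real.add_one_le_exp (-l); linarith
        have hcast : (s : ℝ) ≤ (n' : ℝ) := by exact_mod_cast hs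
        have hsB : (s : ℝ)/B ≤ (n' : ℝ)/B :=
          div_le_div_of_nonneg_right hcast hBpos.le
        have hsB0 : (0 : ℝ) ≤ (s : ℝ)/B := by positivity
        nlinarith [mul_le_mul hsB hq hq0 (by positivity : (0:ℝ) ≤ (n' : ℝ)/B)]

lemma bad_bound (n' B : ℕ) (hB : 0 < B) (l ε : ℝ) (hl0 : 0 ≤ l) (hl1 : l ≤ 1) :
    uniformBins n' B
        {z | ¬ ∀ b : Fin B, ∀ s : ℕ, s ≤ n' → |(load z b s : ℝ) - (s : ℝ)/B| ≤ ε}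
      ≤ ENNReal.ofReal ((2 * B * (n' + 1)) * Real.exp (((n' : ℝ)/B) * l ^ 2 - l * ε)) := by
  haveI := ub_prob n' B hB
  set e : ℝ := Real.exp (((n' : ℝ)/B) * l ^ 2 - l * ε) with he
  have hsub : {z : Fin n' → Fin B |
        ¬ ∀ b : Fin B, ∀ s : ℕ, s ≤ n' → |(load z b s : ℝ) - (s : ℝ)/B| ≤ ε}
      ⊆ ⋃ b ∈ Finset.univ (α := Fin B), ⋃ s ∈ Finset.range (n' + 1),
          ({z | (s : ℝ)/B + ε ≤ (load z b s : ℝ)} ∪ {z | (load z b s : ℝ) ≤ (s : ℝ)/B - ε}) := by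
    intro z hz
    push_neg at hz
    obtain ⟨b, s, hs, habs⟩ := hz
    simp only [Set.mem_iUnion, Finset.mem_range, Finset.mem_univ, Set.mem_union,
      Set.mem_setOf_eq, exists_prop]
    refine ⟨b, trivial, s, Nat.lt_succ_of_le hs, ?_⟩
    rcases le_or_gt ((load z b s : ℝ) - (s : ℝ)/B) 0 with h | h
    · right
      have : ε < -((load z b s : ℝ) - (s : ℝ)/B) := by
        have := abs_of_nonpos h; linarith [habs]
      linarith
    · left
      have : ε < (load z b s : ℝ) - (s : ℝ)/B := by
        have := abs_of_pos h; linarith [habs]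
      linarith
  have hone : ∀ (b : Fin B) (s : ℕ), s ∈ Finset.range (n' + 1) →
      uniformBins n' B ({z | (s : ℝ)/B + ε ≤ (load z b s : ℝ)}
          ∪ {z | (load z b s : ℝ) ≤ (s : ℝ)/B - ε}) ≤ 2 * ENNReal.ofReal e := by
    intro b s hsmem
    have hs : s ≤ n' := Nat.lt_succ_iff.mp (Finset.mem_range.mp hsmem)
    have h1 := tailP_up n' B hB b s hs l ε hl0 hl1
    have h2 := tailP_lo n' B hB b s hs l ε hl0 hl1
    have hu : uniformBins n' B {z | (s : ℝ)/B + ε ≤ (load z b s : ℝ)} ≤ ENNReal.ofReal e :=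
      (ENNReal.le_ofReal_iff_toReal_le (measure_ne_top _ _) (Real.exp_pos _).le).mpr h1
    have hlo : uniformBins n' B {z | (load z b s : ℝ) ≤ (s : ℝ)/B - ε} ≤ ENNReal.ofReal e :=
      (ENNReal.le_ofReal_iff_toReal_le (measure_ne_top _ _) (Real.exp_pos _).le).mpr h2
    calc uniformBins n' B _ ≤ _ + _ := measure_union_le _ _
      _ ≤ ENNReal.ofReal e + ENNReal.ofReal e := add_le_add hu hlo
      _ = 2 * ENNReal.ofReal e := (two_mul _).symm
  calc uniformBins n' B _ ≤ uniformBins n' B (⋃ b ∈ Finset.univ (α := Fin B),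
          ⋃ s ∈ Finset.range (n' + 1),
          ({z | (s : ℝ)/B + ε ≤ (load z b s : ℝ)} ∪ {z | (load z b s : ℝ) ≤ (s : ℝ)/B - ε})) :=
        measure_mono hsub
    _ ≤ ∑ b ∈ Finset.univ (α := Fin B), uniformBins n' B (⋃ s ∈ Finset.range (n' + 1),
          ({z | (s : ℝ)/B + ε ≤ (load z b s : ℝ)} ∪ {z | (load z b s : ℝ) ≤ (s : ℝ)/B - ε})) :=
        measure_biUnion_finset_le _ _
    _ ≤ ∑ _b ∈ Finset.univ (α := Fin B), ∑ s ∈ Finset.range (n' + 1), (2 * ENNReal.ofReal e) := by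
        refine Finset.sum_le_sum fun b _ => ?_
        refine le_trans (measure_biUnion_finset_le _ _) ?_
        exact Finset.sum_le_sum (hone b)
    _ = (B : ℝ≥0∞) * ((n' + 1 : ℕ) : ℝ≥0∞) * (2 * ENNReal.ofReal e) := by
        simp [Finset.sum_const, mul_assoc]
    _ ≤ ENNReal.ofReal ((2 * B * (n' + 1)) * e) := by
        rw [ENNReal.ofReal_mul (by positivity)]
        rw [show ENNReal.ofReal (2 * B * (n' + 1)) = ((2 * B * (n' + 1) : ℕ) : ℝ≥0∞) by
          rw [← ENNReal.ofReal_natCast]; congr 1; push_cast; ring]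
        apply le_of_eq
        push_cast
        ring

lemma mBound_eq (n' B : ℕ) :
    (mBound n' B : ℝ) = (n' : ℝ)/B - dFn ((n' : ℝ)/B) := by
  rw [mBound, dFn]; ring

lemma det_lemma (n' B : ℕ) (hB : 0 < B) (ε : ℝ) (hε0 : 0 ≤ ε)
    (hεd : ε ≤ dFn ((n' : ℝ)/B) / 10)
    (z : Fin n' → Fin B)
    (hz : ∀ b : Fin B, ∀ s : ℕ, s ≤ n' → |(load z b s : ℝ) - (s : ℝ)/B| ≤ ε) :
    (∀ b : Fin B, mBound n' B ≤ (load z b n' : ℤ)) ∧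
    (∀ b : Fin B, ((mBound n' B : ℝ)) - (1/5) * dFn ((n' : ℝ)/B) ≤
        (load z b (hitTime z (mBound n' B)) : ℝ)) := by
  set d : ℝ := dFn ((n' : ℝ)/B) with hd
  have hd0 : 0 ≤ d := by linarith
  have hmr := mBound_eq n' B
  have hload_n' : ∀ b : Fin B, (mBound n' B : ℝ) ≤ (load z b n' : ℝ) := by
    intro b
    have h := abs_le.mp (hz b n' le_rfl)
    have : (n' : ℝ)/B - ε ≤ (load z b n' : ℝ) := by linarith [h.1]
    rw [hmr]
    linarith
  have hi : ∀ b : Fin B, mBound n' B ≤ (load z b n' : ℤ) := by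
    intro b
    exact_mod_cast hload_n' b
  refine ⟨hi, ?_⟩
  have b0 : Fin B := ⟨0, hB⟩
  have hmem : n' ∈ {t : ℕ | ∃ b : Fin B, mBound n' B ≤ (load z b t : ℤ)} := ⟨b0, hi b0⟩
  have hne : {t : ℕ | ∃ b : Fin B, mBound n' B ≤ (load z b t : ℤ)}.Nonempty := ⟨n', hmem⟩
  have htle : hitTime z (mBound n' B) ≤ n' := Nat.sInf_le hmem
  obtain ⟨b1, hb1⟩ := Nat.sInf_mem hne
  set t := hitTime z (mBound n' B) with ht
  have hb1' : (mBound n' B : ℝ) ≤ (load z b1 t : ℝ) := by exact_mod_cast hb1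
  have hup := (abs_le.mp (hz b1 t htle)).2
  -- (t:ℝ)/B ≥ mBound - ε
  intro b
  have hlo := (abs_le.mp (hz b t htle)).1
  have : (t : ℝ)/B - ε ≤ (load z b t : ℝ) := by linarith
  linarith

theorem balls_in_bins_phase_concentration :
    ∃ C : ℝ, 0 < C ∧ ∀ n B n' : ℕ, 1 < B → (B : ℝ) ≤ (n : ℝ) / (Real.log n) ^ 5 →
      (B : ℝ) * (Real.log n) ^ 5 ≤ (n' : ℝ) → n' ≤ n →
      ENNReal.ofReal (1 - C / (n : ℝ) ^ 11) ≤
        uniformBins n' B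
          {z | (∀ b : Fin B, mBound n' B ≤ (load z b n' : ℤ)) ∧
               (∀ b : Fin B,
                 ((mBound n' B : ℝ)) - (1/5) * dFn ((n' : ℝ)/B) ≤
                   (load z b (hitTime z (mBound n' B)) : ℝ))} := by
  refine ⟨Real.exp (12 * 10^9), Real.exp_pos _, ?_⟩
  intro n B n' hB1 hBn hn'lo hn'n
  have hB0 : 0 < B := by omega
  have hB2 : (2:ℝ) ≤ B := by exact_mod_cast hB1
  have hn1 : 1 ≤ n := by
    by_contra h
    push_neg at h
    interval_cases n
    simp [Real.log_zero] at hBn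
    linarith
  rcases le_or_gt 1 (Real.exp (12 * 10^9) / (n:ℝ)^11) with hc | hc
  · rw [ENNReal.ofReal_eq_zero.mpr (by linarith)]
    exact zero_le
  set K := Real.log n with hKdef
  have hnpos : (0:ℝ) < n := by exact_mod_cast hn1
  have hn_eq : (n:ℝ) = Real.exp K := (Real.exp_log hnpos).symm
  clear_value K
  have hn11 : ((n:ℝ))^11 = Real.exp (11 * K) := by
    rw [hn_eq, ← Real.exp_nat_mul]; norm_num
  have hKbig : (10:ℝ)^9 ≤ K := by
    have h2 : Real.exp (12 * 10^9) < Real.exp (11 * K) := by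
      rw [← hn11]
      by_contra h3
      push_neg at h3
      have : 1 ≤ Real.exp (12*10^9) / (n:ℝ)^11 := by
        rw [le_div_iff₀ (by positivity)]; linarith
      linarith
    have h4 := Real.exp_lt_exp.mp h2
    linarith only [h4]
  have hK0 : (0:ℝ) < K := by linarith only [hKbig]
  have hK1 : (1:ℝ) ≤ K := by linarith only [hKbig]
  set y : ℝ := (n':ℝ)/B with hy
  clear_value y
  have hyK : K^5 ≤ y := by
    rw [hy, le_div_iff₀ (by positivity : (0:ℝ) < (B:ℝ))]
    linarith only [hn'lo]
  have hK5 : K ≤ K^5 := le_self_pow₀ hK1 (by norm_num)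
  have hy1 : (1:ℝ) ≤ y := by linarith only [hK1, hK5, hyK]
  have hy0 : (0:ℝ) < y := by linarith
  set v : ℝ := y ^ ((2:ℝ)/3) with hv
  set u : ℝ := y ^ ((1:ℝ)/3) with hu
  clear_value v u
  have hv0 : 0 < v := by rw [hv]; exact Real.rpow_pos_of_pos hy0 _
  have hu0 : 0 < u := by rw [hu]; exact Real.rpow_pos_of_pos hy0 _
  have hvu : v * v = y * u := by
    rw [hv, hu]
    calc y ^ ((2:ℝ)/3) * y ^ ((2:ℝ)/3) = y ^ ((2:ℝ)/3 + 2/3) := (Real.rpow_add hy0 _ _).symm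
      _ = y ^ ((1:ℝ) + 1/3) := by norm_num
      _ = y * y ^ ((1:ℝ)/3) := by rw [Real.rpow_add hy0, Real.rpow_one]
  have hy8 : (8:ℝ) ≤ y := by linarith only [hKbig, hK5, hyK]
  have hv4 : (4:ℝ) ≤ v := by
    have h8 : ((8:ℝ)) ^ ((2:ℝ)/3) ≤ v := by
      rw [hv]; exact Real.rpow_le_rpow (by norm_num) hy8 (by norm_num)
    have h8e : ((8:ℝ)) ^ ((2:ℝ)/3) = 4 := by
      rw [show (8:ℝ) = (2:ℝ)^(3:ℕ) by norm_num, ← Real.rpow_natCast (2:ℝ) 3,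
        ← Real.rpow_mul (by norm_num)]
      norm_num
    linarith
  have hvy : v ≤ y := by
    rw [hv]
    calc y ^ ((2:ℝ)/3) ≤ y ^ (1:ℝ) := Real.rpow_le_rpow_of_exponent_le hy1 (by norm_num)
      _ = y := Real.rpow_one y
  set d : ℝ := dFn y with hdd
  have hd_eq : d = y - (⌈y - (1/2) * v⌉ : ℤ) := by rw [hdd, dFn, ← hv]
  clear_value d
  have hd_lo : v/2 - 1 ≤ d := by
    have h1 := Int.ceil_lt_add_one (y - (1/2) * v)
    rw [hd_eq]; linarith
  have hd_hi : d ≤ v/2 := by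
    have h1 := Int.le_ceil (y - (1/2) * v)
    rw [hd_eq]; linarith
  have hd_lo4 : v/4 ≤ d := by linarith
  have hd0 : 0 < d := by linarith
  set ε : ℝ := d / 10 with hε
  set l : ℝ := ε / (2*y) with hl
  clear_value ε l
  have hε0 : 0 ≤ ε := by rw [hε]; linarith
  have hl0 : 0 ≤ l := by rw [hl]; positivity
  have hl1 : l ≤ 1 := by
    rw [hl, div_le_one (by positivity)]
    linarith
  have hXeq : y * l^2 - l * ε = -(ε^2/(4*y)) := by
    rw [hl]; field_simp; ring
  have hX1 : u/6400 ≤ ε^2/(4*y) := by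
    have hεv : v/40 ≤ ε := by linarith
    have h1 : (v/40)^2 ≤ ε^2 := pow_le_pow_left₀ (by positivity) hεv 2
    have h2 : (v/40)^2 = y*u/1600 := by
      have h3 : (v/40)^2 = v*v/1600 := by ring
      rw [h3, hvu]
    rw [div_le_div_iff₀ (by norm_num) (by positivity)]
    linarith only [h1, h2]
  have huK : 10^6 * K ≤ u := by
    have h1 : (K^5 : ℝ) ^ ((1:ℝ)/3) ≤ u := by
      rw [hu]; exact Real.rpow_le_rpow (by positivity) hyK (by norm_num)
    have h2 : (K^5 : ℝ) ^ ((1:ℝ)/3) = K ^ ((5:ℝ)/3) := by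
      rw [← Real.rpow_natCast K 5, ← Real.rpow_mul hK0.le]
      norm_num
    have h3 : K ^ ((5:ℝ)/3) = K ^ ((2:ℝ)/3) * K := by
      rw [show (5:ℝ)/3 = 2/3 + 1 by norm_num, Real.rpow_add hK0, Real.rpow_one]
    have h4 : (10:ℝ)^6 ≤ K ^ ((2:ℝ)/3) := by
      have h0 : (0:ℝ) ≤ (10:ℝ)^9 := by positivity
      have h5 := Real.rpow_le_rpow h0 hKbig (by norm_num : (0:ℝ) ≤ 2/3)
      refine le_trans (le_of_eq ?_) h5
      rw [show ((10:ℝ)^9) = ((10:ℝ)^3)^(3:ℕ) by norm_num, ← Real.rpow_natCast ((10:ℝ)^3) 3,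
        ← Real.rpow_mul (by positivity)]
      norm_num
    have h6 := mul_le_mul_of_nonneg_right h4 hK0.le
    linarith only [h1, h2, h3, h6]
  haveI := ub_prob n' B hB0
  have hbad := bad_bound n' B hB0 l ε hl0 hl1
  rw [← hy] at hbad
  have hreal : (2 * (B:ℝ) * ((n':ℝ) + 1)) * Real.exp (y * l^2 - l * ε)
      ≤ Real.exp (12*10^9) / (n:ℝ)^11 := by
    have hBn_le : (B:ℝ) ≤ n := by
      refine hBn.trans (div_le_self hnpos.le ?_)
      linarith only [hK5, hK1]
    have hn'le : (n':ℝ) ≤ n := by exact_mod_cast hn'n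
    have h2B : (2 * (B:ℝ) * ((n':ℝ) + 1)) ≤ 4 * (n:ℝ)^2 := by
      have hh : (B:ℝ) * ((n':ℝ) + 1) ≤ n * (2*n) :=
        mul_le_mul hBn_le (by linarith) (by positivity) hnpos.le
      linarith only [hh]
    have h4n : (4:ℝ) ≤ n := by
      rw [hn_eq]
      have he1 : (2:ℝ) ≤ Real.exp 1 := by linarith [Real.add_one_le_exp 1]
      have he2 : (4:ℝ) ≤ Real.exp 2 := by
        rw [show (2:ℝ) = 1+1 by norm_num, Real.exp_add]
        have := mul_le_mul he1 he1 (by norm_num) (Real.exp_pos 1).le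
        linarith only [this]
      have h2K := Real.exp_le_exp.mpr (show (2:ℝ) ≤ K by linarith only [hKbig])
      linarith only [he2, h2K]
    have hkey : (4:ℝ) * (n:ℝ)^13 ≤ Real.exp (ε^2/(4*y)) := by
      have hXK : 14 * K ≤ ε^2/(4*y) := by
        have ha : (14:ℝ) * K ≤ 10^6 * K / 6400 := by linarith only [hK0]
        have hb : (10:ℝ)^6 * K / 6400 ≤ u / 6400 := by linarith only [huK]
        linarith only [ha, hb, hX1]
      have hn13 : ((n:ℝ))^13 = Real.exp (13*K) := by
        rw [hn_eq, ← Real.exp_nat_mul]; norm_num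
      have h4e : (4:ℝ) ≤ Real.exp K := by rw [← hn_eq]; exact h4n
      calc (4:ℝ) * (n:ℝ)^13 ≤ Real.exp K * Real.exp (13*K) := by
            rw [hn13]
            exact mul_le_mul_of_nonneg_right h4e (Real.exp_pos _).le
        _ = Real.exp (14*K) := by rw [← Real.exp_add]; ring_nf
        _ ≤ Real.exp (ε^2/(4*y)) := Real.exp_le_exp.mpr hXK
    rw [hXeq, Real.exp_neg]
    have hstep : (2 * (B:ℝ) * ((n':ℝ) + 1)) * (Real.exp (ε^2/(4*y)))⁻¹ ≤ 1 / (n:ℝ)^11 := by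
      rw [← div_eq_mul_inv, div_le_div_iff₀ (Real.exp_pos _) (by positivity)]
      calc (2 * (B:ℝ) * ((n':ℝ) + 1)) * (n:ℝ)^11 ≤ (4 * (n:ℝ)^2) * (n:ℝ)^11 := by
            apply mul_le_mul_of_nonneg_right h2B (by positivity)
        _ = 4 * (n:ℝ)^13 := by ring
        _ ≤ Real.exp (ε^2/(4*y)) := hkey
        _ = 1 * Real.exp (ε^2/(4*y)) := (one_mul _).symm
    refine hstep.trans ?_
    apply div_le_div_of_nonneg_right ?_ (by positivity)
    exact Real.one_le_exp (by positivity)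
  have hbad2 : uniformBins n' B
      {z | ¬ ∀ b : Fin B, ∀ s : ℕ, s ≤ n' → |(load z b s : ℝ) - (s:ℝ)/B| ≤ ε}
      ≤ ENNReal.ofReal (Real.exp (12*10^9) / (n:ℝ)^11) := by
    refine hbad.trans (ENNReal.ofReal_le_ofReal ?_)
    exact hreal
  have hBadMeas : MeasurableSet
      {z : Fin n' → Fin B | ¬ ∀ b : Fin B, ∀ s : ℕ, s ≤ n' →
        |(load z b s : ℝ) - (s:ℝ)/B| ≤ ε} :=
    Set.Finite.measurableSet (Set.toFinite _)
  have hsub : {z : Fin n' → Fin B | ¬ ∀ b : Fin B, ∀ s : ℕ, s ≤ n' →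
        |(load z b s : ℝ) - (s:ℝ)/B| ≤ ε}ᶜ ⊆
      {z | (∀ b : Fin B, mBound n' B ≤ (load z b n' : ℤ)) ∧
           (∀ b : Fin B,
             ((mBound n' B : ℝ)) - (1/5) * d ≤
               (load z b (hitTime z (mBound n' B)) : ℝ))} := by
    intro z hz
    simp only [Set.mem_compl_iff, Set.mem_setOf_eq, not_not] at hz
    have hεd : ε ≤ dFn ((n':ℝ)/B) / 10 := by rw [← hy, ← hdd]; linarith
    have hdl := det_lemma n' B hB0 ε hε0 hεd z hz
    rw [← hy, ← hdd] at hdl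
    exact hdl
  calc ENNReal.ofReal (1 - Real.exp (12 * 10^9) / (n:ℝ)^11)
      = 1 - ENNReal.ofReal (Real.exp (12 * 10^9) / (n:ℝ)^11) := by
        rw [ENNReal.ofReal_sub _ (by positivity), ENNReal.ofReal_one]
    _ ≤ 1 - uniformBins n' B
          {z | ¬ ∀ b : Fin B, ∀ s : ℕ, s ≤ n' → |(load z b s : ℝ) - (s:ℝ)/B| ≤ ε} :=
        tsub_le_tsub_left hbad2 1
    _ = uniformBins n' B
          {z | ¬ ∀ b : Fin B, ∀ s : ℕ, s ≤ n' → |(load z b s : ℝ) - (s:ℝ)/B| ≤ ε}ᶜ :=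
        (prob_compl_eq_one_sub hBadMeas).symm
    _ ≤ _ := measure_mono hsub
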